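/- arXiv:1904.10192 — 2 statements merged into one kernel-verified Lean document; each statement's English description precedes it below -/
import Mathlib

section
/- Fix $b\ge 1$ and nonzero complex numbers $r_1,\dots,r_b$ with $|r_j|<1$, and constants $c_1,\dots,c_b$. Let $g_1,\dots,g_b\ge 0$ with $g_b>0$ and $\sum_i g_i = 1$, let $0<\mu<1$, and let $y_i\ge 0$ with $\sum_i y_i=1$ and $Y(z)=\sum_i y_i z^i$ convergent on the closed unit disk. Suppose that for every $n$ with $1\le n\le b-1$: $\sum_{j=1}^b c_j r_j^n\Big[(1-\mu)\sum_{i=n+1}^b g_i r_j^{-i} + \mu\sum_{i=1}^{\infty} y_i r_j^i\Big(\sum_{m=1}^b g_m r_j^{-m} - \sum_{m=1}^{\min(i+n,b)} g_m r_j^{-m}\Big)\Big]=0$. Then $\sum_{j=1}^b c_j r_j^{-k} = 0$ for all $k=1,2,\dots,b-1$. -/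
open Finset

private lemma aux_range_Icc (a : ℕ) (f : ℕ → ℂ) :
    ∑ i ∈ Finset.range a, f (i+1) = ∑ i ∈ Finset.Icc 1 a, f i := by
  apply Finset.sum_nbij' (fun i => i + 1) (fun i => i - 1) <;> intros <;> simp_all <;> omega

/-- In the `GI^X/Geo^Y/1` EAS queue, the boundary conditions for states
`1 ≤ n ≤ b-1` force the linear relations `∑_j c_j r_j^{-k} = 0`,
`k = 1, …, b-1`. -/
theorem stmt_3 (b : ℕ) (hb : 1 ≤ b)
    (r c : Fin b → ℂ) (hr0 : ∀ j, r j ≠ 0) (hr1 : ∀ j, ‖r j‖ < 1)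
    (g y : ℕ → ℝ) (μ : ℝ) (hμ0 : 0 < μ) (hμ1 : μ < 1)
    (hgpos : ∀ i, 0 ≤ g i) (hg : ∀ i, i ∉ Finset.Icc 1 b → g i = 0)
    (hgb : 0 < g b) (hgsum : ∑ i ∈ Finset.Icc 1 b, g i = 1)
    (hy0 : y 0 = 0) (hypos : ∀ i, 0 ≤ y i) (hysum : ∑' i : ℕ, y i = 1)
    (hcond : ∀ n, 1 ≤ n → n ≤ b - 1 →
      (∑ j, c j * r j ^ n *
        ((1 - (μ : ℂ)) * (∑ i ∈ Finset.Icc (n + 1) b, (g i : ℂ) * (r j)⁻¹ ^ i) +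
          (μ : ℂ) * ∑' i : ℕ, (y (i + 1) : ℂ) * r j ^ (i + 1) *
            ((∑ m ∈ Finset.Icc 1 b, (g m : ℂ) * (r j)⁻¹ ^ m) -
              ∑ m ∈ Finset.Icc 1 (min (i + 1 + n) b), (g m : ℂ) * (r j)⁻¹ ^ m)))
        = 0) :
    ∀ k, 1 ≤ k → k ≤ b - 1 → ∑ j, c j * (r j)⁻¹ ^ k = 0 := by
  classical
  set β : ℕ → ℕ → ℂ := fun n k =>
    (1 - (μ:ℂ)) * (g (n+k) : ℂ) +
      (μ:ℂ) * ∑ i ∈ Icc 1 (b-n-k), (y i : ℂ) * (g (n+k+i) : ℂ) with hβ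
  have key : ∀ n, 1 ≤ n → n ≤ b - 1 →
      ∑ k ∈ Icc 1 (b-n), β n k * (∑ j, c j * (r j)⁻¹ ^ k) = 0 := by
    intro n hn1 hn2
    have hnb : n + 1 ≤ b := by omega
    have hE : ∀ j : Fin b,
        c j * r j ^ n *
          ((1 - (μ : ℂ)) * (∑ i ∈ Finset.Icc (n + 1) b, (g i : ℂ) * (r j)⁻¹ ^ i) +
            (μ : ℂ) * ∑' i : ℕ, (y (i + 1) : ℂ) * r j ^ (i + 1) *
              ((∑ m ∈ Finset.Icc 1 b, (g m : ℂ) * (r j)⁻¹ ^ m) -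
                ∑ m ∈ Finset.Icc 1 (min (i + 1 + n) b), (g m : ℂ) * (r j)⁻¹ ^ m))
        = ∑ k ∈ Icc 1 (b-n), β n k * (c j * (r j)⁻¹ ^ k) := by
      intro j
      set R := r j with hR
      have hpow : ∀ a k : ℕ, R ^ a * R⁻¹ ^ (a + k) = R⁻¹ ^ k := by
        intro a k
        rw [pow_add, ← mul_assoc, ← mul_pow, mul_inv_cancel₀ (hr0 j), one_pow, one_mul]
      -- Term 1
      have h1 : R ^ n * (∑ i ∈ Icc (n+1) b, (g i : ℂ) * R⁻¹ ^ i)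
          = ∑ k ∈ Icc 1 (b-n), (g (n+k) : ℂ) * R⁻¹ ^ k := by
        have h : Finset.Icc (n+1) b = Finset.map (addLeftEmbedding n) (Finset.Icc 1 (b-n)) := by
          rw [Finset.map_add_left_Icc]; congr 1; omega
        rw [h, Finset.sum_map, Finset.mul_sum]
        refine Finset.sum_congr rfl fun k hk => ?_
        simp only [addLeftEmbedding_apply]
        rw [← mul_assoc, mul_comm (R^n), mul_assoc, hpow]
      -- Term 2 : the tsum
      have h2 : (∑' i : ℕ, (y (i + 1) : ℂ) * R ^ (i + 1) *
              ((∑ m ∈ Finset.Icc 1 b, (g m : ℂ) * R⁻¹ ^ m) -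
                ∑ m ∈ Finset.Icc 1 (min (i + 1 + n) b), (g m : ℂ) * R⁻¹ ^ m))
          = ∑ i ∈ range (b-n-1), (y (i + 1) : ℂ) * R ^ (i + 1) *
              (∑ m ∈ Ioc (i+1+n) b, (g m : ℂ) * R⁻¹ ^ m) := by
        rw [tsum_eq_sum (s := range (b-n-1)) ?_]
        · refine Finset.sum_congr rfl fun i hi => ?_
          have hib : i + 1 + n ≤ b := by
            simp only [mem_range] at hi; omega
          have hmin : min (i+1+n) b = i+1+n := min_eq_left hib
          rw [hmin]
          congr 1
          have hsplit := Finset.sum_Ioc_consecutive (fun m => (g m : ℂ) * R⁻¹ ^ m)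
            (Nat.zero_le (i+1+n)) hib
          have e1 : Finset.Icc 1 b = Finset.Ioc 0 b := Finset.Icc_add_one_left_eq_Ioc 0 b
          have e2 : Finset.Icc 1 (i+1+n) = Finset.Ioc 0 (i+1+n) := Finset.Icc_add_one_left_eq_Ioc 0 _
          rw [e1, e2, ← hsplit]
          ring
        · intro i hi
          have hib : b ≤ i + 1 + n := by
            simp only [mem_range] at hi; omega
          have hmin : min (i+1+n) b = b := min_eq_right hib
          rw [hmin, sub_self, mul_zero]
      -- rewrite each tsum summand after multiplying by R^n
      have h3 : R ^ n * ((μ:ℂ) * ∑' i : ℕ, (y (i + 1) : ℂ) * R ^ (i + 1) *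
              ((∑ m ∈ Finset.Icc 1 b, (g m : ℂ) * R⁻¹ ^ m) -
                ∑ m ∈ Finset.Icc 1 (min (i + 1 + n) b), (g m : ℂ) * R⁻¹ ^ m))
          = (μ:ℂ) * ∑ k ∈ Icc 1 (b-n),
              (∑ i ∈ Icc 1 (b-n-k), (y i : ℂ) * (g (n+k+i) : ℂ)) * R⁻¹ ^ k := by
        rw [h2]
        have h4 : ∀ i ∈ range (b-n-1),
            R ^ n * ((y (i + 1) : ℂ) * R ^ (i + 1) *
              (∑ m ∈ Ioc (i+1+n) b, (g m : ℂ) * R⁻¹ ^ m))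
            = ∑ k ∈ Icc 1 (b-n), (y (i+1) : ℂ) * (g (n+k+(i+1)) : ℂ) * R⁻¹ ^ k := by
          intro i hi
          simp only [mem_range] at hi
          have h : Finset.Ioc (i+1+n) b
              = Finset.map (addLeftEmbedding (i+1+n)) (Finset.Icc 1 (b-n-1-i)) := by
            rw [Finset.map_add_left_Icc, ← Finset.Icc_add_one_left_eq_Ioc]; congr 1; omega
          rw [h, Finset.sum_map, Finset.mul_sum, Finset.mul_sum]
          have step : ∀ k ∈ Icc 1 (b-n-1-i),
              R ^ n * ((y (i+1) : ℂ) * R ^ (i+1) *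
                ((g (addLeftEmbedding (i+1+n) k) : ℂ) * R⁻¹ ^ (addLeftEmbedding (i+1+n) k)))
              = (y (i+1) : ℂ) * (g (n+k+(i+1)) : ℂ) * R⁻¹ ^ k := by
            intro k hk
            simp only [addLeftEmbedding_apply]
            have hp : R ^ n * ((y (i+1) : ℂ) * R ^ (i+1) * ((g (i+1+n+k) : ℂ) * R⁻¹ ^ (i+1+n+k)))
                = (y (i+1) : ℂ) * (g (i+1+n+k) : ℂ) * (R ^ (i+1+n) * R⁻¹ ^ ((i+1+n)+k)) := by
              rw [pow_add R (i+1) n]; ring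
            rw [hp, hpow, show i+1+n+k = n+k+(i+1) by omega]
          refine (Finset.sum_congr rfl step).trans
            (Finset.sum_subset (Finset.Icc_subset_Icc_right
              (show b-n-1-i ≤ b-n by omega)) ?_)
          intro k hk hk'
          simp only [mem_Icc] at hk hk'
          have : g (n+k+(i+1)) = 0 := hg _ (by simp only [mem_Icc]; omega)
          rw [this]
          norm_num
        rw [mul_left_comm, Finset.mul_sum, Finset.sum_congr rfl h4, Finset.sum_comm]
        congr 1
        refine Finset.sum_congr rfl fun k hk => ?_
        simp only [mem_Icc] at hk
        rw [Finset.sum_mul]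
        have h5 : ∑ i ∈ range (b-n-1), (y (i+1) : ℂ) * (g (n+k+(i+1)) : ℂ) * R⁻¹ ^ k
            = ∑ i ∈ Icc 1 (b-n-1), (y i : ℂ) * (g (n+k+i) : ℂ) * R⁻¹ ^ k :=
          aux_range_Icc (b-n-1) (fun i => (y i : ℂ) * (g (n+k+i) : ℂ) * R⁻¹ ^ k)
        rw [h5]
        refine (Finset.sum_subset (Finset.Icc_subset_Icc_right
          (show b-n-k ≤ b-n-1 by omega)) ?_).symm
        intro i hi hi'
        simp only [mem_Icc] at hi hi'
        have : g (n+k+i) = 0 := hg _ (by simp only [mem_Icc]; omega)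
        rw [this]
        norm_num
      have := hcond n hn1 hn2
      calc c j * R ^ n *
          ((1 - (μ : ℂ)) * (∑ i ∈ Finset.Icc (n + 1) b, (g i : ℂ) * R⁻¹ ^ i) +
            (μ : ℂ) * ∑' i : ℕ, (y (i + 1) : ℂ) * R ^ (i + 1) *
              ((∑ m ∈ Finset.Icc 1 b, (g m : ℂ) * R⁻¹ ^ m) -
                ∑ m ∈ Finset.Icc 1 (min (i + 1 + n) b), (g m : ℂ) * R⁻¹ ^ m))
          = c j * ((1 - (μ:ℂ)) * (R ^ n * (∑ i ∈ Icc (n+1) b, (g i : ℂ) * R⁻¹ ^ i)) +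
              (R ^ n * ((μ:ℂ) * ∑' i : ℕ, (y (i + 1) : ℂ) * R ^ (i + 1) *
              ((∑ m ∈ Finset.Icc 1 b, (g m : ℂ) * R⁻¹ ^ m) -
                ∑ m ∈ Finset.Icc 1 (min (i + 1 + n) b), (g m : ℂ) * R⁻¹ ^ m)))) := by ring
        _ = c j * ((1 - (μ:ℂ)) * ∑ k ∈ Icc 1 (b-n), (g (n+k) : ℂ) * R⁻¹ ^ k +
              (μ:ℂ) * ∑ k ∈ Icc 1 (b-n),
                (∑ i ∈ Icc 1 (b-n-k), (y i : ℂ) * (g (n+k+i) : ℂ)) * R⁻¹ ^ k) := by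
            rw [h1, h3]
        _ = ∑ k ∈ Icc 1 (b-n), β n k * (c j * R⁻¹ ^ k) := by
            rw [Finset.mul_sum, Finset.mul_sum, mul_add, Finset.mul_sum, Finset.mul_sum,
              ← Finset.sum_add_distrib]
            refine Finset.sum_congr rfl fun k hk => ?_
            simp only [hβ]
            ring
    have hc := hcond n hn1 hn2
    rw [Finset.sum_congr rfl fun j _ => hE j, Finset.sum_comm] at hc
    rw [← hc]
    refine Finset.sum_congr rfl fun k hk => ?_
    rw [Finset.mul_sum]
  -- the induction
  have hβb : ∀ k, 1 ≤ k → k ≤ b - 1 → β (b-k) k = (1 - (μ:ℂ)) * (g b : ℂ) := by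
    intro k hk1 hk2
    simp only [hβ]
    have e1 : b - k + k = b := by omega
    have e2 : b - (b-k) - k = 0 := by omega
    rw [e1, e2]
    simp
  have hβne : ((1 : ℂ) - (μ:ℂ)) * (g b : ℂ) ≠ 0 := by
    apply mul_ne_zero
    · have : ((1 - μ : ℝ) : ℂ) ≠ 0 := Complex.ofReal_ne_zero.mpr (by linarith)
      push_cast at this
      exact this
    · exact Complex.ofReal_ne_zero.mpr (ne_of_gt hgb)
  intro k
  induction k using Nat.strong_induction_on with
  | _ k ih =>
    intro hk1 hk2
    have hn1 : 1 ≤ b - k := by omega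
    have hn2 : b - k ≤ b - 1 := by omega
    have hkey := key (b-k) hn1 hn2
    have ebk : b - (b-k) = k := by omega
    rw [ebk] at hkey
    -- split off top term
    have hsplit : ∑ k' ∈ Icc 1 k, β (b-k) k' * (∑ j, c j * (r j)⁻¹ ^ k')
        = (∑ k' ∈ Icc 1 (k-1), β (b-k) k' * (∑ j, c j * (r j)⁻¹ ^ k')) +
          β (b-k) k * (∑ j, c j * (r j)⁻¹ ^ k) := by
      have e : Icc 1 k = Ioc 0 k := Finset.Icc_add_one_left_eq_Ioc 0 k
      have e' : Icc 1 (k-1) = Ioc 0 (k-1) := Finset.Icc_add_one_left_eq_Ioc 0 _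
      rw [e, e']
      have : k = (k-1) + 1 := by omega
      rw [this, Finset.sum_Ioc_succ_top (Nat.zero_le _)]
      rw [← this]
    rw [hsplit] at hkey
    have hz : ∑ k' ∈ Icc 1 (k-1), β (b-k) k' * (∑ j, c j * (r j)⁻¹ ^ k') = 0 := by
      apply Finset.sum_eq_zero
      intro k' hk'
      simp only [mem_Icc] at hk'
      rw [ih k' (by omega) hk'.1 (by omega), mul_zero]
    rw [hz, zero_add, hβb k hk1 hk2] at hkey
    exact (mul_eq_zero.mp hkey).resolve_left hβne
end

section
/- Let $\hat\mu>0$, let $Y$ be a pgf, let $\hat A$ be the distribution function of a positive random variable $\hat A$ with Laplace–Stieltjes transform $A^*$, and for $\Delta>0$ define the discretized pgf $A_\Delta(w) = \sum_{n=1}^{\infty} P\big((n-1)\Delta < \hat A \le n\Delta\big) w^n$. Then for each fixed $s$ with $|s|\le 1$, $\lim_{\Delta\to 0^+} A_\Delta\big(1-\hat\mu\Delta + \hat\mu\Delta\, Y(s)\big) = A^*\big(\hat\mu(1-Y(s))\big) = \int_0^\infty e^{-\hat\mu(1-Y(s))x}\, d\hat A(x)$. -/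
open MeasureTheory

open Filter Set


lemma stmt6_aux_lim (c : ℂ) (x : ℝ) (hx : 0 < x) :
    Tendsto (fun Δ : ℝ => ((1 : ℂ) - c * Δ) ^ ⌈x / Δ⌉₊) (nhdsWithin 0 (Set.Ioi 0))
      (nhds (Complex.exp (-c * x))) := by
  -- derivative of t ↦ log (1 - c t) at 0 is -c
  have h1 : HasDerivAt (fun w : ℂ => 1 - c * w) (-c) 0 := by
    simpa using ((hasDerivAt_id (0 : ℂ)).const_mul c).const_sub 1
  have h2 : HasDerivAt Complex.log 1 ((fun w : ℂ => 1 - c * w) 0) := by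
    simpa using Complex.hasDerivAt_log (z := 1) Complex.one_mem_slitPlane
  have h3 : HasDerivAt (fun t : ℝ => Complex.log (1 - c * t)) (-c) 0 := by
    simpa using (h2.comp 0 h1).comp_ofReal
  have hslope : Tendsto (fun Δ : ℝ => (Δ : ℂ)⁻¹ * Complex.log (1 - c * Δ))
      (nhdsWithin 0 (Set.Ioi 0)) (nhds (-c)) := by
    have := (hasDerivAt_iff_tendsto_slope.mp h3).mono_left
      (nhdsWithin_mono 0 (by intro t ht; exact ne_of_gt ht : Set.Ioi (0:ℝ) ⊆ {0}ᶜ))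
    refine this.congr (fun Δ => ?_)
    simp [slope, Complex.real_smul, Complex.ofReal_inv]
  have hceil : Tendsto (fun Δ : ℝ => ((⌈x / Δ⌉₊ : ℝ) * Δ)) (nhdsWithin 0 (Set.Ioi 0)) (nhds x) := by
    have hle : ∀ᶠ Δ : ℝ in nhdsWithin (0:ℝ) (Set.Ioi 0), x ≤ (⌈x / Δ⌉₊ : ℝ) * Δ := by
      filter_upwards [self_mem_nhdsWithin] with Δ (hΔ : 0 < Δ)
      rw [← div_le_iff₀ hΔ]
      exact Nat.le_ceil _
    have hge : ∀ᶠ Δ : ℝ in nhdsWithin (0:ℝ) (Set.Ioi 0), (⌈x / Δ⌉₊ : ℝ) * Δ ≤ x + Δ := by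
      filter_upwards [self_mem_nhdsWithin] with Δ (hΔ : 0 < Δ)
      rw [← le_div_iff₀ hΔ]
      have := Nat.ceil_lt_add_one (a := x / Δ) (by positivity)
      rw [add_div]
      calc (⌈x / Δ⌉₊ : ℝ) ≤ x / Δ + 1 := this.le
        _ ≤ x / Δ + Δ / Δ := by rw [div_self hΔ.ne']
    have h0 : Tendsto (fun Δ : ℝ => x + Δ) (nhdsWithin 0 (Set.Ioi 0)) (nhds x) := by
      have : Tendsto (fun Δ : ℝ => x + Δ) (nhds 0) (nhds (x + 0)) :=
        (continuous_const.add continuous_id).tendsto 0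
      simpa using this.mono_left nhdsWithin_le_nhds
    exact tendsto_of_tendsto_of_tendsto_of_le_of_le' tendsto_const_nhds h0 hle hge
  have hmul : Tendsto (fun Δ : ℝ => (⌈x / Δ⌉₊ : ℂ) * Complex.log (1 - c * Δ))
      (nhdsWithin 0 (Set.Ioi 0)) (nhds (-c * x)) := by
    have := ((Complex.continuous_ofReal.tendsto x).comp hceil).mul hslope
    rw [mul_comm]
    refine (this.congr' ?_)
    filter_upwards [self_mem_nhdsWithin] with Δ (hΔ : 0 < Δ)
    have : (Δ : ℂ) ≠ 0 := by exact_mod_cast hΔ.ne'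
    push_cast
    field_simp
    simp only [Function.comp_apply]
    push_cast
    ring
  have hexp := (Complex.continuous_exp.tendsto _).comp hmul
  refine hexp.congr' ?_
  have hev : ∀ᶠ Δ : ℝ in nhdsWithin (0:ℝ) (Set.Ioi 0), ‖c * (Δ:ℂ)‖ < 1 := by
    have hr : (0:ℝ) < ‖c‖ + 1 := by positivity
    filter_upwards [Ioo_mem_nhdsGT_of_mem (show (0:ℝ) ∈ Set.Ico (0:ℝ) (‖c‖ + 1)⁻¹ from
      ⟨le_refl 0, by positivity⟩)] with Δ hΔ
    have h2 : Δ * (‖c‖ + 1) < 1 := (lt_div_iff₀ hr).mp (by simpa [one_div] using hΔ.2)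
    have h3 : ‖c * (Δ:ℂ)‖ = ‖c‖ * Δ := by
      simp [Complex.norm_real, abs_of_pos hΔ.1]
    rw [h3]
    nlinarith [norm_nonneg c, hΔ.1]
  filter_upwards [hev] with Δ hΔ
  have hz : (1 : ℂ) - c * Δ ≠ 0 := by
    intro h
    have h1 : c * (Δ:ℂ) = 1 := by linear_combination -h
    rw [h1] at hΔ
    simp at hΔ
  rw [Function.comp_apply]
  conv_rhs => rw [← Complex.exp_log hz]
  rw [← Complex.exp_nat_mul]

lemma stmt6_aux_eq (ν : Measure ℝ) [IsProbabilityMeasure ν] (hpos : ν (Set.Iic 0) = 0)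
    (z : ℂ) (hz : ‖z‖ ≤ 1) (Δ : ℝ) (hΔ : 0 < Δ) :
    ∑' n : ℕ, ((ν (Set.Ioc ((n : ℝ) * Δ) (((n : ℝ) + 1) * Δ))).toReal : ℂ) * z ^ (n + 1)
      = ∫ x : ℝ, z ^ ⌈x / Δ⌉₊ ∂ν := by
  set g : ℝ → ℂ := fun x => z ^ ⌈x / Δ⌉₊ with hg
  have hmeas : Measurable g :=
    measurable_from_nat.comp (Nat.measurable_ceil.comp (measurable_id.div_const Δ))
  have hint : Integrable g ν := by
    refine Integrable.mono' (integrable_const 1) hmeas.aestronglyMeasurable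
      (Filter.Eventually.of_forall fun x => ?_)
    rw [hg]
    simpa [norm_pow] using pow_le_one₀ (norm_nonneg z) hz
  have hres : ν.restrict (Set.Ioi 0) = ν := by
    refine Measure.restrict_eq_self_of_ae_mem ?_
    rw [Filter.eventually_iff, mem_ae_iff]
    convert hpos using 2
    ext x
    simp [not_lt]
  have hceq : ∀ (n : ℕ) (x : ℝ), x ∈ Set.Ioc ((n:ℝ) * Δ) (((n:ℝ)+1) * Δ) → ⌈x / Δ⌉₊ = n + 1 := by
    intro n x hx
    rw [Nat.ceil_eq_iff (Nat.succ_ne_zero n)]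
    constructor
    · push_cast
      rw [lt_div_iff₀ hΔ]
      simpa using hx.1
    · rw [div_le_iff₀ hΔ]
      push_cast
      exact hx.2
  have hUnion : Set.Ioi (0:ℝ) = ⋃ n : ℕ, Set.Ioc ((n:ℝ) * Δ) (((n:ℝ)+1) * Δ) := by
    ext x
    simp only [Set.mem_iUnion, Set.mem_Ioi, Set.mem_Ioc]
    constructor
    · intro hx
      have h1 : 1 ≤ ⌈x / Δ⌉₊ := Nat.one_le_ceil_iff.mpr (by positivity)
      obtain ⟨k, hk⟩ := Nat.exists_eq_add_of_le h1
      refine ⟨k, ?_, ?_⟩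
      · rw [← lt_div_iff₀ hΔ]
        by_contra hcon
        push_neg at hcon
        have := Nat.ceil_le.mpr hcon
        omega
      · rw [← div_le_iff₀ hΔ]
        have := Nat.le_ceil (x / Δ)
        rw [hk] at this
        push_cast at this ⊢
        linarith
    · rintro ⟨n, h1, h2⟩
      have : (0:ℝ) ≤ (n:ℝ) * Δ := by positivity
      linarith
  have hdisj : Pairwise (Function.onFun Disjoint fun n : ℕ => Set.Ioc ((n:ℝ) * Δ) (((n:ℝ)+1) * Δ)) := by
    have hmono : Monotone (fun n : ℕ => (n:ℝ) * Δ) := fun a b hab => by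
      have h : (a:ℝ) ≤ b := by exact_mod_cast hab
      exact mul_le_mul_of_nonneg_right h hΔ.le
    convert hmono.pairwise_disjoint_on_Ioc_succ using 3 with n
    simp [Order.succ_eq_add_one]
  calc ∑' n : ℕ, ((ν (Set.Ioc ((n : ℝ) * Δ) (((n : ℝ) + 1) * Δ))).toReal : ℂ) * z ^ (n + 1)
      = ∑' n : ℕ, ∫ x in Set.Ioc ((n:ℝ) * Δ) (((n:ℝ)+1) * Δ), g x ∂ν := by
        congr 1
        funext n
        rw [show (∫ x in Set.Ioc ((n:ℝ) * Δ) (((n:ℝ)+1) * Δ), g x ∂ν)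
            = ∫ _ in Set.Ioc ((n:ℝ) * Δ) (((n:ℝ)+1) * Δ), (z ^ (n+1) : ℂ) ∂ν from
          setIntegral_congr_fun measurableSet_Ioc
            (fun x hx => by simp only [hg, hceq n x hx]), setIntegral_const]
        simp [Complex.real_smul, mul_comm, Measure.real]
    _ = ∫ x in ⋃ n : ℕ, Set.Ioc ((n:ℝ) * Δ) (((n:ℝ)+1) * Δ), g x ∂ν :=
        (integral_iUnion (fun _ => measurableSet_Ioc) hdisj hint.integrableOn).symm
    _ = ∫ x, g x ∂ν := by rw [← hUnion, hres]


/-- As the slot length `Δ → 0⁺`, the discretized inter-arrival pgf evaluated at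
`1 - μ̂Δ + μ̂Δ Y(s)` converges to the Laplace–Stieltjes transform
`A*(μ̂(1 - Y(s))) = ∫ e^{-μ̂(1-Y(s))x} dÂ(x)`. -/
theorem stmt_6 (ν : Measure ℝ) [IsProbabilityMeasure ν]
    (hpos : ν (Set.Iic 0) = 0)
    (muh : ℝ) (hmuh : 0 < muh)
    (y : ℕ → ℝ) (hy0 : y 0 = 0) (hypos : ∀ i, 0 ≤ y i) (hysum : ∑' i : ℕ, y i = 1)
    (s : ℂ) (hs : ‖s‖ ≤ 1)
    (Ys : ℂ) (hYs : Ys = ∑' i : ℕ, (y i : ℂ) * s ^ i) :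
    Filter.Tendsto
      (fun Δ : ℝ => ∑' n : ℕ,
        ((ν (Set.Ioc ((n : ℝ) * Δ) (((n : ℝ) + 1) * Δ))).toReal : ℂ) *
          ((1 : ℂ) - (muh : ℂ) * Δ + (muh : ℂ) * Δ * Ys) ^ (n + 1))
      (nhdsWithin 0 (Set.Ioi 0))
      (nhds (∫ x : ℝ, Complex.exp (-((muh : ℂ) * (1 - Ys)) * (x : ℂ)) ∂ν)) := by
  set c : ℂ := (muh : ℂ) * (1 - Ys) with hc
  -- summability and norm bound on Ys
  have hsumy : Summable y := by
    by_contra h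
    rw [tsum_eq_zero_of_not_summable h] at hysum
    norm_num at hysum
  have hYsn : ‖Ys‖ ≤ 1 := by
    rw [hYs]
    have hsum2 : Summable (fun i : ℕ => ‖(y i : ℂ) * s ^ i‖) := by
      refine Summable.of_nonneg_of_le (fun i => norm_nonneg _) (fun i => ?_) hsumy
      rw [norm_mul, norm_pow, Complex.norm_real, Real.norm_eq_abs, abs_of_nonneg (hypos i)]
      calc y i * ‖s‖ ^ i ≤ y i * 1 ^ i :=
            mul_le_mul_of_nonneg_left (pow_le_pow_left₀ (norm_nonneg s) hs i) (hypos i)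
        _ = y i := by ring
    calc ‖∑' i : ℕ, (y i : ℂ) * s ^ i‖ ≤ ∑' i : ℕ, ‖(y i : ℂ) * s ^ i‖ :=
          norm_tsum_le_tsum_norm hsum2
      _ ≤ ∑' i : ℕ, y i := by
          refine Summable.tsum_le_tsum (fun i => ?_) hsum2 hsumy
          rw [norm_mul, norm_pow, Complex.norm_real, Real.norm_eq_abs, abs_of_nonneg (hypos i)]
          calc y i * ‖s‖ ^ i ≤ y i * 1 ^ i :=
                mul_le_mul_of_nonneg_left (pow_le_pow_left₀ (norm_nonneg s) hs i) (hypos i)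
            _ = y i := by ring
      _ = 1 := hysum
  have hzeq : ∀ Δ : ℝ, (1:ℂ) - (muh:ℂ) * Δ + (muh:ℂ) * Δ * Ys = 1 - c * Δ := fun Δ => by
    rw [hc]; ring
  have hznorm : ∀ Δ : ℝ, 0 ≤ Δ → muh * Δ ≤ 1 → ‖(1:ℂ) - c * Δ‖ ≤ 1 := by
    intro Δ hΔ0 hΔ1
    rw [← hzeq]
    have h1 : (1:ℂ) - (muh:ℂ) * Δ + (muh:ℂ) * Δ * Ys
        = ((1 - muh * Δ : ℝ) : ℂ) + ((muh * Δ : ℝ) : ℂ) * Ys := by push_cast; ring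
    rw [h1]
    calc ‖((1 - muh * Δ : ℝ) : ℂ) + ((muh * Δ : ℝ) : ℂ) * Ys‖
        ≤ ‖((1 - muh * Δ : ℝ) : ℂ)‖ + ‖((muh * Δ : ℝ) : ℂ) * Ys‖ := norm_add_le _ _
      _ ≤ (1 - muh * Δ) + (muh * Δ) * 1 := by
          refine add_le_add ?_ ?_
          · rw [Complex.norm_real, Real.norm_eq_abs, abs_of_nonneg (by linarith)]
          · rw [norm_mul, Complex.norm_real, Real.norm_eq_abs,
              abs_of_nonneg (by positivity)]
            exact mul_le_mul_of_nonneg_left hYsn (by positivity)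
      _ = 1 := by ring
  have hae : ∀ᵐ x ∂ν, x ∈ Set.Ioi (0:ℝ) := by
    rw [Filter.eventually_iff, mem_ae_iff]
    convert hpos using 2
    ext x
    simp [not_lt]
  have hmeasF : ∀ Δ : ℝ, AEStronglyMeasurable (fun x : ℝ => ((1:ℂ) - c * Δ) ^ ⌈x / Δ⌉₊) ν :=
    fun Δ => (measurable_from_nat.comp
      (Nat.measurable_ceil.comp (measurable_id.div_const Δ))).aestronglyMeasurable
  have hEv : Set.Ioo (0:ℝ) muh⁻¹ ∈ nhdsWithin (0:ℝ) (Set.Ioi 0) :=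
    Ioo_mem_nhdsGT_of_mem ⟨le_refl 0, by positivity⟩
  have hDCT := tendsto_integral_filter_of_dominated_convergence (μ := ν)
      (l := nhdsWithin (0:ℝ) (Set.Ioi 0))
      (F := fun (Δ : ℝ) (x : ℝ) => ((1:ℂ) - c * Δ) ^ ⌈x / Δ⌉₊)
      (f := fun x : ℝ => Complex.exp (-c * x))
      (fun _ => (1:ℝ))
      (Filter.Eventually.of_forall hmeasF)
      (by
        filter_upwards [hEv] with Δ hΔ
        refine Filter.Eventually.of_forall fun x => ?_
        have h1 : muh * Δ ≤ 1 := by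
          rw [← mul_inv_cancel₀ hmuh.ne']
          exact mul_le_mul_of_nonneg_left hΔ.2.le hmuh.le
        rw [norm_pow]
        exact pow_le_one₀ (norm_nonneg _) (hznorm Δ hΔ.1.le h1))
      (integrable_const 1)
      (by
        filter_upwards [hae] with x hx
        exact stmt6_aux_lim c x hx)
  refine hDCT.congr' ?_
  filter_upwards [hEv] with Δ hΔ
  have h1 : muh * Δ ≤ 1 := by
    rw [← mul_inv_cancel₀ hmuh.ne']
    exact mul_le_mul_of_nonneg_left hΔ.2.le hmuh.le
  simp only [hzeq]
  exact (stmt6_aux_eq ν hpos _ (hznorm Δ hΔ.1.le h1) Δ hΔ.1).symm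
end
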